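/- Define sequences by uₖ = -(2ρ+1)u_{k-1} + γ²u_{k-2} with u₋₁ = 0, u₀ = 1, where γ² = v²/4 - ρ², 0 ≤ ρ < v/2, and tⱼ = uⱼ + (s+1-n+v/2+ρ)u_{j-1} + (s+1-n)(v/2+ρ)u_{j-2} for j ≥ 1, where s is an integer with 0 ≤ s ≤ n-1 and n-1+ρ ≤ v/2 + s < n+ρ. Then (-1)ᵏtₖ > 0 for all k ≥ 1. -/
import Mathlib


theorem stmt_18 (v ρ : ℝ) (hρ0 : 0 ≤ ρ) (hρ : ρ < v / 2)
    (n s : ℕ) (hs : s ≤ n - 1) (hn : 1 ≤ n)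
    (hlow : (n : ℝ) - 1 + ρ ≤ v / 2 + s) (hhigh : v / 2 + s < (n : ℝ) + ρ)
    (u : ℕ → ℝ) (hu0 : u 0 = 1) (hu1 : u 1 = -(2 * ρ + 1))
    (hurec : ∀ k : ℕ, u (k + 2) = -(2 * ρ + 1) * u (k + 1) + (v ^ 2 / 4 - ρ ^ 2) * u k)
    (t : ℕ → ℝ)
    (ht1 : t 1 = u 1 + ((s : ℝ) + 1 - n + v / 2 + ρ) * u 0)
    (htj : ∀ j : ℕ, 2 ≤ j → t j = u j + ((s : ℝ) + 1 - n + v / 2 + ρ) * u (j - 1) +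
      ((s : ℝ) + 1 - n) * (v / 2 + ρ) * u (j - 2)) :
    ∀ k : ℕ, 1 ≤ k → 0 < (-1 : ℝ) ^ k * t k := by
  have hv2 : 0 < v / 2 + ρ := by linarith
  have hc : 0 < 2 * ρ + 1 := by linarith
  have hg : 0 < v ^ 2 / 4 - ρ ^ 2 := by nlinarith
  have ht1v : t 1 = v / 2 + s - n - ρ := by rw [ht1, hu1, hu0]; ring
  have ht1neg : t 1 < 0 := by rw [ht1v]; linarith
  have ht1low : -1 ≤ t 1 := by rw [ht1v]; linarith
  have ht2eq : t 2 = (v / 2 + ρ) * (t 1 + 1) - (2 * ρ + 1) * t 1 := by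
    have e2 := htj 2 le_rfl
    rw [show 2 - 1 = 1 by omega, show 2 - 2 = 0 by omega] at e2
    rw [e2, hurec 0, hu1, hu0, ht1v]; ring
  have ht2pos : 0 < t 2 := by
    have h1 : 0 ≤ (v / 2 + ρ) * (t 1 + 1) :=
      mul_nonneg hv2.le (by linarith)
    have h2 : 0 < (2 * ρ + 1) * (-t 1) := mul_pos hc (by linarith)
    nlinarith
  have key : ∀ k, 1 ≤ k →
      t (k + 2) = -(2 * ρ + 1) * t (k + 1) + (v ^ 2 / 4 - ρ ^ 2) * t k := by
    intro k hk
    match k, hk with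
    | 1, _ =>
      have e3 := htj 3 (by norm_num)
      have e2 := htj 2 le_rfl
      rw [show 3 - 1 = 2 by omega, show 3 - 2 = 1 by omega] at e3
      rw [show 2 - 1 = 1 by omega, show 2 - 2 = 0 by omega] at e2
      rw [e3, e2, ht1, hurec 1, hurec 0, hu1, hu0]; ring
    | (m + 2), _ =>
      have e1 := htj (m + 2) (by omega)
      have e2 := htj (m + 3) (by omega)
      have e3 := htj (m + 4) (by omega)
      rw [show m + 2 - 1 = m + 1 by omega, show m + 2 - 2 = m by omega] at e1
      rw [show m + 3 - 1 = m + 2 by omega, show m + 3 - 2 = m + 1 by omega] at e2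
      rw [show m + 4 - 1 = m + 3 by omega, show m + 4 - 2 = m + 2 by omega] at e3
      rw [show m + 2 + 2 = m + 4 by omega, show m + 2 + 1 = m + 3 by omega,
        e3, e2, e1, hurec (m + 2), hurec (m + 1), hurec m]
      ring
  have main : ∀ m : ℕ, 0 < (-1 : ℝ) ^ (m + 1) * t (m + 1) ∧
      0 < (-1 : ℝ) ^ (m + 2) * t (m + 2) := by
    intro m
    induction m with
    | zero =>
      constructor
      · rw [pow_one]; linarith
      · norm_num [ht2pos]
    | succ m ih =>
      refine ⟨ih.2, ?_⟩
      have hk := key (m + 1) (by omega)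
      rw [show m + 1 + 2 = m + 3 by omega, show m + 1 + 1 = m + 2 by omega] at hk
      rw [show m + 1 + 2 = m + 3 by omega, hk]
      have h1 := ih.1
      have h2 := ih.2
      have hrw : (-1 : ℝ) ^ (m + 3) *
          (-(2 * ρ + 1) * t (m + 2) + (v ^ 2 / 4 - ρ ^ 2) * t (m + 1)) =
          (2 * ρ + 1) * ((-1 : ℝ) ^ (m + 2) * t (m + 2)) +
          (v ^ 2 / 4 - ρ ^ 2) * ((-1 : ℝ) ^ (m + 1) * t (m + 1)) := by
        ring
      rw [hrw]
      have := mul_pos hc h2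
      have := mul_pos hg h1
      linarith
  intro k hk
  obtain ⟨m, rfl⟩ := Nat.exists_eq_add_of_le hk
  rw [add_comm 1 m]
  exact (main m).1
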